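/- If B₁' and B̃₁' are k×l complex matrices with linearly independent columns, and S₁₁ (k×k) and R (invertible n×n) satisfy S₁₁·[B₁' 0] = [B̃₁' 0]·conj(R) (as k×n matrices), with S₁₁ invertible, then R is block lower triangular: R = [[R₁₁,0],[R₂₁,R₂₂]] with R₁₁ of size l×l. -/

import Mathlib

open Matrix

/-- If `S₁₁ · [B₁' 0] = [B̃₁' 0] · conj R` with `B₁'`, `B̃₁'` having linearly independent
columns and `S₁₁` invertible, then `R` is block lower triangular. -/
theorem R_block_lower_triangular {k l n' : ℕ}
    (B₁' B₂' : Matrix (Fin k) (Fin l) ℂ) (S₁₁ : Matrix (Fin k) (Fin k) ℂ)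
    (R : Matrix (Fin l ⊕ Fin n') (Fin l ⊕ Fin n') ℂ)
    (hcols : LinearIndependent ℂ fun j : Fin l => fun i => B₁' i j)
    (hcols' : LinearIndependent ℂ fun j : Fin l => fun i => B₂' i j)
    (hS : IsUnit S₁₁) (hR : IsUnit R)
    (heq : S₁₁ * fromCols B₁' (0 : Matrix (Fin k) (Fin n') ℂ)
      = fromCols B₂' (0 : Matrix (Fin k) (Fin n') ℂ) * R.map (starRingEnd ℂ)) :
    ∀ (i : Fin l) (j : Fin n'), R (Sum.inl i) (Sum.inr j) = 0 := by
  intro i j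
  have hv := (Fintype.linearIndependent_iff.mp hcols')
    (fun i' => (starRingEnd ℂ) (R (Sum.inl i') (Sum.inr j))) ?_ i
  · exact (starRingEnd ℂ).injective (by simpa using hv)
  · funext x
    have h := congrFun (congrFun heq x) (Sum.inr j)
    simp [mul_apply, fromCols, Fintype.sum_sum_type] at h
    simpa [mul_comm] using h.symm
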